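/- Diagonal quadratic case in ℝ^d: let φ_k(w) = (1/2)wᵀA_k w + b_kᵀw + c_k with A_k diagonal positive definite, F(w) = (1/2)wᵀA w + bᵀw + c their average (A = (1/p)∑A_k diagonal), R(w) = ‖w‖₁, P = F + R with minimizer w*, and P_k(w;a) = φ_k(w) + (∇F(a) - ∇φ_k(a))ᵀw + R(w). Then for all a, P(w*) - (1/p)∑_k min_w P_k(w;a) ≤ γ‖a - w*‖², where γ = max_{i=1,…,d} (1/p)∑_{k=1}^p (A(i,i) - A_k(i,i))²/A_k(i,i). -/

import Mathlib

open Finset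

private lemma quad_lb (v β x : ℝ) (hv : 0 < v) :
    -(β ^ 2) / (2 * v) ≤ v / 2 * x ^ 2 + β * x := by
  rw [div_le_iff₀ (by positivity)]
  nlinarith [sq_nonneg (v * x + β)]

private lemma subgrad_abs (u b w : ℝ) (hu : 0 < u)
    (hmin : ∀ x : ℝ, u / 2 * w ^ 2 + b * w + |w| ≤ u / 2 * x ^ 2 + b * x + |x|) :
    |(-(u * w + b))| ≤ 1 := by
  have key : ∀ ε : ℝ, 0 ≤ u / 2 * ε ^ 2 - (-(u * w + b)) * ε + |ε| := by
    intro ε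
    have h := hmin (w + ε)
    have h2 : |w + ε| ≤ |w| + |ε| := abs_add_le _ _
    nlinarith [h, h2]
  rw [abs_le]
  set t : ℝ := -(u * w + b) with htdef
  have hune : u ≠ 0 := ne_of_gt hu
  constructor
  · by_contra hcon
    push_neg at hcon
    have hε : (t + 1) / u < 0 := div_neg_of_neg_of_pos (by linarith) hu
    have hk := key ((t + 1) / u)
    rw [abs_of_neg hε] at hk
    have hue : u * ((t + 1) / u) = t + 1 := by field_simp
    have h5 : u * ((t + 1) / u) * ((t + 1) / u) = (t + 1) * ((t + 1) / u) := by rw [hue]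
    have h6 : 0 < (t + 1) * ((t + 1) / u) := mul_pos_of_neg_of_neg (by linarith) hε
    clear_value t
    linarith [hk, h5, h6]
  · by_contra hcon
    push_neg at hcon
    have hε : 0 < (t - 1) / u := div_pos (by linarith) hu
    have hk := key ((t - 1) / u)
    rw [abs_of_pos hε] at hk
    have hue : u * ((t - 1) / u) = t - 1 := by field_simp
    have h5 : u * ((t - 1) / u) * ((t - 1) / u) = (t - 1) * ((t - 1) / u) := by rw [hue]
    have h6 : 0 < (t - 1) * ((t - 1) / u) := mul_pos (by linarith) hε
    clear_value t
    linarith [hk, h5, h6]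

private lemma subgrad_eq (u b w : ℝ) (hu : 0 < u)
    (hmin : ∀ x : ℝ, u / 2 * w ^ 2 + b * w + |w| ≤ u / 2 * x ^ 2 + b * x + |x|) :
    (-(u * w + b)) * w = |w| := by
  have hta := subgrad_abs u b w hu hmin
  set t : ℝ := -(u * w + b) with htdef
  have hle : t * w ≤ |w| := by
    calc t * w ≤ |t * w| := le_abs_self _
      _ = |t| * |w| := abs_mul _ _
      _ ≤ 1 * |w| := mul_le_mul_of_nonneg_right hta (abs_nonneg _)
      _ = |w| := one_mul _
  have hge : |w| ≤ t * w := by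
    rcases eq_or_ne w 0 with hw | hw
    · simp [hw]
    · by_contra hcon
      push_neg at hcon
      have hw2 : 0 < u * w ^ 2 := by positivity
      set ε : ℝ := |w| - t * w with hεdef
      have hεpos : 0 < ε := by linarith
      set s : ℝ := min 1 (ε / (u * w ^ 2)) with hsdef
      have hs0 : 0 < s := lt_min one_pos (div_pos hεpos hw2)
      have hs1 : s ≤ 1 := min_le_left _ _
      have hs2 : s * (u * w ^ 2) ≤ ε := by
        rw [← le_div_iff₀ hw2]
        exact min_le_right _ _
      have hk := hmin (w - s * w)
      have habs : |w - s * w| = (1 - s) * |w| := by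
        rw [show w - s * w = (1 - s) * w by ring, abs_mul, abs_of_nonneg (by linarith)]
      rw [habs] at hk
      have hk2 : s * (|w| + (u * w + b) * w) ≤ u / 2 * s ^ 2 * w ^ 2 := by nlinarith [hk]
      have hε2 : ε = |w| + (u * w + b) * w := by rw [hεdef, htdef]; ring
      have h3 : s * ε ≤ u / 2 * s ^ 2 * w ^ 2 := by rw [hε2]; exact hk2
      have h4 := mul_le_mul_of_nonneg_left hs2 hs0.le
      have h5 := mul_pos hs0 hεpos
      clear_value t ε s
      linarith [h3, h4, h5]
  linarith

private lemma sum_update {d : ℕ} (g : Fin d → ℝ → ℝ) (w : Fin d → ℝ) (i : Fin d) (x : ℝ) :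
    ∑ j, g j (Function.update w i x j) = ∑ j, g j (w j) - g i (w i) + g i x := by
  rw [Finset.sum_congr rfl fun j _ => Function.apply_update (fun j y => g j y) w i x j]
  rw [Finset.sum_update_of_mem (Finset.mem_univ i)]
  rw [Finset.sum_eq_sum_sdiff_singleton_add (Finset.mem_univ i) fun j => g j (w j)]
  ring

private lemma coord_min {d : ℕ} (g : Fin d → ℝ → ℝ) (Q : (Fin d → ℝ) → ℝ) (c : ℝ)
    (hQ : ∀ w, Q w = (∑ i, g i (w i)) + c) (w : Fin d → ℝ)
    (hmin : ∀ y, Q w ≤ Q y) (i : Fin d) (x : ℝ) : g i (w i) ≤ g i x := by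
  have h := hmin (Function.update w i x)
  rw [hQ, hQ, sum_update] at h
  linarith


/-- Diagonal quadratic case in ℝ^d (Lemma 5): the local-global gap is bounded by
`γ‖a - w*‖²` with `γ = maxᵢ (1/p)∑ₖ (A(i,i) - Aₖ(i,i))²/Aₖ(i,i)`.
Diagonal matrices are represented by their diagonals `A k : Fin d → ℝ`. -/
theorem local_global_gap_quadratic_diag
    (d p : ℕ) (hd : 0 < d) (hp : 0 < p)
    (A : Fin p → Fin d → ℝ) (bk : Fin p → Fin d → ℝ) (ck : Fin p → ℝ)
    (hA : ∀ k i, 0 < A k i)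
    (Abar : Fin d → ℝ) (b : Fin d → ℝ) (c : ℝ)
    (hAbar : ∀ i, Abar i = (1 / (p : ℝ)) * ∑ k, A k i)
    (hb : ∀ i, b i = (1 / (p : ℝ)) * ∑ k, bk k i)
    (hc : c = (1 / (p : ℝ)) * ∑ k, ck k)
    (φ : Fin p → (Fin d → ℝ) → ℝ)
    (hφ : ∀ k w, φ k w = (1 / 2) * ∑ i, A k i * w i ^ 2 + ∑ i, bk k i * w i + ck k)
    (F R P : (Fin d → ℝ) → ℝ)
    (hF : ∀ w, F w = (1 / 2) * ∑ i, Abar i * w i ^ 2 + ∑ i, b i * w i + c)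
    (hR : ∀ w, R w = ∑ i, |w i|)
    (hP : ∀ w, P w = F w + R w)
    (Pk : Fin p → (Fin d → ℝ) → (Fin d → ℝ) → ℝ)
    -- `Pk k w a = φ_k(w) + (∇F(a) - ∇φ_k(a))ᵀw + R(w)`
    (hPk : ∀ k w a, Pk k w a =
      φ k w + ∑ i, ((Abar i * a i + b i) - (A k i * a i + bk k i)) * w i + R w)
    (wstar : Fin d → ℝ) (hwstar : IsMinOn P Set.univ wstar)
    (wk : Fin p → (Fin d → ℝ) → (Fin d → ℝ))
    (hwk : ∀ k a, IsMinOn (fun w => Pk k w a) Set.univ (wk k a))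
    (γ : ℝ)
    (hγ : γ = ⨆ i : Fin d, (1 / (p : ℝ)) * ∑ k, (Abar i - A k i) ^ 2 / A k i)
    (a : Fin d → ℝ) :
    P wstar - (1 / (p : ℝ)) * ∑ k, Pk k (wk k a) a
      ≤ γ * ∑ i, (a i - wstar i) ^ 2 := by
  haveI : NeZero p := ⟨Nat.pos_iff_ne_zero.mp hp⟩
  haveI : NeZero d := ⟨Nat.pos_iff_ne_zero.mp hd⟩
  have hp' : (0:ℝ) < (p:ℝ) := by exact_mod_cast hp
  have hpne : (p:ℝ) ≠ 0 := ne_of_gt hp'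
  have hu : ∀ i, 0 < Abar i := by
    intro i
    rw [hAbar i]
    have h1 : 0 < ∑ k, A k i :=
      Finset.sum_pos (fun k _ => hA k i) Finset.univ_nonempty
    positivity
  -- P as a separable sum
  have Psum : ∀ w : Fin d → ℝ,
      P w = (∑ i, (Abar i / 2 * w i ^ 2 + b i * w i + |w i|)) + c := by
    intro w
    have h : ∑ i, (Abar i / 2 * w i ^ 2 + b i * w i + |w i|)
        = 1 / 2 * ∑ i, Abar i * w i ^ 2 + (∑ i, b i * w i + ∑ i, |w i|) := by
      rw [Finset.mul_sum, ← Finset.sum_add_distrib, ← Finset.sum_add_distrib]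
      exact Finset.sum_congr rfl fun i _ => by ring
    rw [hP w, hF w, hR w, h]; ring
  -- coordinatewise minimality of wstar
  have hmin1 : ∀ (i : Fin d) (x : ℝ),
      Abar i / 2 * (wstar i) ^ 2 + b i * wstar i + |wstar i|
        ≤ Abar i / 2 * x ^ 2 + b i * x + |x| :=
    fun i x => coord_min (fun i y => Abar i / 2 * y ^ 2 + b i * y + |y|) P c Psum wstar
      (fun y => isMinOn_iff.mp hwstar y (Set.mem_univ _)) i x
  have ht1 : ∀ i, |(-(Abar i * wstar i + b i))| ≤ 1 :=
    fun i => subgrad_abs _ _ _ (hu i) (hmin1 i)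
  have ht2 : ∀ i, (-(Abar i * wstar i + b i)) * wstar i = |wstar i| :=
    fun i => subgrad_eq _ _ _ (hu i) (hmin1 i)
  -- value of P at wstar
  have hPstar : P wstar = c - ∑ i, Abar i / 2 * wstar i ^ 2 := by
    rw [Psum wstar]
    rw [Finset.sum_congr rfl (fun i (_ : i ∈ Finset.univ) =>
      show Abar i / 2 * wstar i ^ 2 + b i * wstar i + |wstar i|
          = -(Abar i / 2 * wstar i ^ 2) from by rw [← ht2 i]; ring)]
    rw [Finset.sum_neg_distrib]
    ring
  -- Pk as a separable sum
  have hPkSum : ∀ k (W : Fin d → ℝ), Pk k W a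
      = ck k + ∑ i, (A k i / 2 * W i ^ 2 + (b i + (Abar i - A k i) * a i) * W i + |W i|) := by
    intro k W
    have h : ∑ i, (A k i / 2 * W i ^ 2 + (b i + (Abar i - A k i) * a i) * W i + |W i|)
        = 1 / 2 * ∑ i, A k i * W i ^ 2 + (∑ i, bk k i * W i
          + (∑ i, ((Abar i * a i + b i) - (A k i * a i + bk k i)) * W i + ∑ i, |W i|)) := by
      rw [Finset.mul_sum, ← Finset.sum_add_distrib, ← Finset.sum_add_distrib,
        ← Finset.sum_add_distrib]
      exact Finset.sum_congr rfl fun i _ => by ring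
    rw [hPk k W a, hφ k W, hR W, h]; ring
  -- lower bound on each Pk at its minimizer
  have hPkLB : ∀ k, ck k - ∑ i, ((Abar i - A k i) * a i - Abar i * wstar i) ^ 2 / (2 * A k i)
      ≤ Pk k (wk k a) a := by
    intro k
    rw [hPkSum k (wk k a)]
    have hterm : ∀ i ∈ Finset.univ,
        -(((Abar i - A k i) * a i - Abar i * wstar i) ^ 2) / (2 * A k i)
        ≤ A k i / 2 * (wk k a i) ^ 2 + (b i + (Abar i - A k i) * a i) * wk k a i
          + |wk k a i| := by
      intro i _
      have hq := quad_lb (A k i) ((Abar i - A k i) * a i - Abar i * wstar i) (wk k a i) (hA k i)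
      have habs : (-(Abar i * wstar i + b i)) * wk k a i ≤ |wk k a i| := by
        calc (-(Abar i * wstar i + b i)) * wk k a i
            ≤ |(-(Abar i * wstar i + b i)) * wk k a i| := le_abs_self _
          _ = |(-(Abar i * wstar i + b i))| * |wk k a i| := abs_mul _ _
          _ ≤ 1 * |wk k a i| := mul_le_mul_of_nonneg_right (ht1 i) (abs_nonneg _)
          _ = |wk k a i| := one_mul _
      nlinarith [hq, habs]
    have hsum := Finset.sum_le_sum hterm
    have hneg : ∑ i, -(((Abar i - A k i) * a i - Abar i * wstar i) ^ 2) / (2 * A k i)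
        = -∑ i, ((Abar i - A k i) * a i - Abar i * wstar i) ^ 2 / (2 * A k i) := by
      rw [← Finset.sum_neg_distrib]
      exact Finset.sum_congr rfl fun i _ => by rw [neg_div]
    rw [hneg] at hsum
    linarith
  -- sum of deviations vanishes
  have hsumδ : ∀ i, ∑ k, (Abar i - A k i) = 0 := by
    intro i
    rw [Finset.sum_sub_distrib, Finset.sum_const, Finset.card_univ, Fintype.card_fin,
      nsmul_eq_mul, hAbar i]
    field_simp
    ring
  -- exact algebraic identity
  have ident : ∀ (k : Fin p) (i : Fin d),
      ((Abar i - A k i) * a i - Abar i * wstar i) ^ 2 / (2 * A k i)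
        - Abar i / 2 * wstar i ^ 2
      = (Abar i - A k i) * (wstar i ^ 2 / 2 - a i * wstar i)
        + (Abar i - A k i) ^ 2 / (2 * A k i) * (a i - wstar i) ^ 2 := by
    intro k i
    have hv := (hA k i).ne'
    field_simp
    ring
  have e1 : (c - ∑ i, Abar i / 2 * wstar i ^ 2)
      - (1 / (p:ℝ)) * ∑ k, (ck k -
          ∑ i, ((Abar i - A k i) * a i - Abar i * wstar i) ^ 2 / (2 * A k i))
      = (1 / (p:ℝ)) * ∑ k,
          ((∑ i, ((Abar i - A k i) * a i - Abar i * wstar i) ^ 2 / (2 * A k i))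
            - ∑ i, Abar i / 2 * wstar i ^ 2) := by
    simp only [hc, Finset.sum_sub_distrib, Finset.sum_const, Finset.card_univ,
      Fintype.card_fin, nsmul_eq_mul]
    field_simp
    ring
  have e2 : ∀ k : Fin p,
      (∑ i, ((Abar i - A k i) * a i - Abar i * wstar i) ^ 2 / (2 * A k i))
        - ∑ i, Abar i / 2 * wstar i ^ 2
      = ∑ i, ((Abar i - A k i) * (wstar i ^ 2 / 2 - a i * wstar i)
          + (Abar i - A k i) ^ 2 / (2 * A k i) * (a i - wstar i) ^ 2) := by
    intro k
    rw [← Finset.sum_sub_distrib]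
    exact Finset.sum_congr rfl fun i _ => ident k i
  have e3 : ∑ k, ∑ i, ((Abar i - A k i) * (wstar i ^ 2 / 2 - a i * wstar i)
        + (Abar i - A k i) ^ 2 / (2 * A k i) * (a i - wstar i) ^ 2)
      = ∑ i, (∑ k, (Abar i - A k i) ^ 2 / (2 * A k i)) * (a i - wstar i) ^ 2 := by
    rw [Finset.sum_comm]
    refine Finset.sum_congr rfl fun i _ => ?_
    rw [Finset.sum_add_distrib, ← Finset.sum_mul, ← Finset.sum_mul, hsumδ i]
    ring
  have Egap : (c - ∑ i, Abar i / 2 * wstar i ^ 2)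
      - (1 / (p:ℝ)) * ∑ k, (ck k -
          ∑ i, ((Abar i - A k i) * a i - Abar i * wstar i) ^ 2 / (2 * A k i))
      = ∑ i, ((1 / (p:ℝ)) * ∑ k, (Abar i - A k i) ^ 2 / (2 * A k i)) * (a i - wstar i) ^ 2 := by
    rw [e1, Finset.sum_congr rfl (fun k _ => e2 k), e3, Finset.mul_sum]
    exact Finset.sum_congr rfl fun i _ => by ring
  -- γ dominates each coordinate coefficient
  have hγi : ∀ i, (1 / (p:ℝ)) * ∑ k, (Abar i - A k i) ^ 2 / (2 * A k i) ≤ γ := by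
    intro i
    have h1 : (1 / (p:ℝ)) * ∑ k, (Abar i - A k i) ^ 2 / (2 * A k i)
        ≤ (1 / (p:ℝ)) * ∑ k, (Abar i - A k i) ^ 2 / A k i := by
      apply mul_le_mul_of_nonneg_left _ (by positivity)
      apply Finset.sum_le_sum
      intro k _
      apply div_le_div_of_nonneg_left (sq_nonneg _) (hA k i)
      linarith [hA k i]
    have h2 : (1 / (p:ℝ)) * ∑ k, (Abar i - A k i) ^ 2 / A k i ≤ γ := by
      rw [hγ]
      exact le_ciSup (f := fun i : Fin d => (1 / (p:ℝ)) * ∑ k, (Abar i - A k i) ^ 2 / A k i)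
        (Set.Finite.bddAbove (Set.finite_range _)) i
    linarith
  -- final chain
  calc P wstar - (1 / (p:ℝ)) * ∑ k, Pk k (wk k a) a
      ≤ P wstar - (1 / (p:ℝ)) * ∑ k, (ck k -
          ∑ i, ((Abar i - A k i) * a i - Abar i * wstar i) ^ 2 / (2 * A k i)) := by
        have hs : ∑ k, (ck k -
            ∑ i, ((Abar i - A k i) * a i - Abar i * wstar i) ^ 2 / (2 * A k i))
            ≤ ∑ k, Pk k (wk k a) a := Finset.sum_le_sum fun k _ => hPkLB k
        have hmul := mul_le_mul_of_nonneg_left hs (le_of_lt (by positivity : (0:ℝ) < 1 / (p:ℝ)))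
        linarith
    _ = ∑ i, ((1 / (p:ℝ)) * ∑ k, (Abar i - A k i) ^ 2 / (2 * A k i)) * (a i - wstar i) ^ 2 := by
        rw [hPstar]; exact Egap
    _ ≤ ∑ i, γ * (a i - wstar i) ^ 2 :=
        Finset.sum_le_sum fun i _ => mul_le_mul_of_nonneg_right (hγi i) (sq_nonneg _)
    _ = γ * ∑ i, (a i - wstar i) ^ 2 := (Finset.mul_sum _ _ _).symm
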